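/- Let E be a complete real normed vector space, let A : E → E be a continuous linear map, and let u : ℝ → E be differentiable with u′(t) = A(u(t)) for all t ∈ ℝ. Then for every p ∈ ℕ, every t ∈ ℝ and every h ∈ ℝ, the error of the degree-p Taylor step satisfies ‖u(t + h) − ∑_{k=0}^{p} (h^k / k!)·A^k(u(t))‖ ≤ ‖u(t)‖ · ‖A‖^{p+1} · |h|^{p+1} / (p+1)! · exp(|h|·‖A‖). -/

import Mathlib

open NormedSpace Set
set_option synthInstance.maxHeartbeats 400000

theorem flow_exp
    {E : Type*} [NormedAddCommGroup E] [NormedSpace ℝ E] [CompleteSpace E]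
    (A : E →L[ℝ] E) (u : ℝ → E) (hu : Differentiable ℝ u)
    (hode : ∀ t : ℝ, deriv u t = A (u t)) (t h : ℝ) :
    u (t + h) = exp (h • A) (u t) := by
  set f : ℝ → E := fun s => u (t + s) with hf
  set g : ℝ → E := fun s => exp (s • A) (u t) with hg
  have key : EqOn f g (Ioo (-(|h|+1)) (|h|+1)) := by
    apply ODE_solution_unique_of_mem_Ioo (v := fun _ x => A x) (s := fun _ => univ) (t₀ := 0)
      (K := ‖A‖₊) (fun _ _ => A.lipschitz.lipschitzOnWith)
      (by constructor <;> [linarith [abs_nonneg h]; linarith [abs_nonneg h]])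
    · intro s _
      refine ⟨?_, trivial⟩
      have h1 : HasDerivAt u (A (u (t + s))) (t + s) := by
        rw [← hode]; exact (hu (t + s)).hasDerivAt
      have h2 : HasDerivAt (fun s : ℝ => t + s) 1 s := (hasDerivAt_id s).const_add t
      exact (by simpa using h1.scomp s h2 : HasDerivAt (u ∘ HAdd.hAdd t) (A (u (t + s))) s)
    · intro s _
      refine ⟨?_, trivial⟩
      exact (by simpa using (hasDerivAt_exp_smul_const' (𝕂 := ℝ) A s).clm_apply (hasDerivAt_const s (u t)) :
        HasDerivAt (fun y => exp (y • A) (u t)) (A (exp (s • A) (u t))) s)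
    · simp [hf, hg]
  have := key (x := h)
    (by constructor <;> [linarith [neg_abs_le h]; linarith [le_abs_self h]])
  simpa [hf, hg] using this

theorem taylor_step_error_linear_ode
    {E : Type*} [NormedAddCommGroup E] [NormedSpace ℝ E] [CompleteSpace E]
    (A : E →L[ℝ] E) (u : ℝ → E) (hu : Differentiable ℝ u)
    (hode : ∀ t : ℝ, deriv u t = A (u t)) :
    ∀ (p : ℕ) (t h : ℝ),
      ‖u (t + h) - ∑ k ∈ Finset.range (p + 1),
          (h ^ k / (Nat.factorial k : ℝ)) • (A ^ k) (u t)‖ ≤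
        ‖u t‖ * ‖A‖ ^ (p + 1) * |h| ^ (p + 1) / (Nat.factorial (p + 1) : ℝ) *
          Real.exp (|h| * ‖A‖) := by
  intro p t h
  set a : ℕ → E := fun k => (h ^ k / (Nat.factorial k : ℝ)) • (A ^ k) (u t) with ha
  -- Summability of a
  have hsumA : Summable (fun n : ℕ => ((Nat.factorial n : ℝ))⁻¹ • (h • A) ^ n) :=
    expSeries_summable' (𝕂 := ℝ) (h • A)
  have haeq : ∀ n : ℕ, a n = (((Nat.factorial n : ℝ))⁻¹ • (h • A) ^ n) (u t) := by
    intro n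
    simp only [ha, ContinuousLinearMap.smul_apply, smul_pow]
    rw [smul_smul (((Nat.factorial n : ℝ))⁻¹) (h ^ n), div_eq_inv_mul]
  have hsuma : Summable a := by
    have h2 := hsumA.map (ContinuousLinearMap.apply ℝ E (u t))
      (ContinuousLinearMap.apply ℝ E (u t)).continuous
    simp only [Function.comp_def, ContinuousLinearMap.apply_apply] at h2
    exact h2.congr fun n => (haeq n).symm
  -- u (t+h) as a tsum
  have hexp : u (t + h) = ∑' n : ℕ, a n := by
    rw [flow_exp A u hu hode t h, exp_eq_tsum (𝕂 := ℝ)]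
    have := (ContinuousLinearMap.apply ℝ E (u t)).map_tsum hsumA
    simp only [ContinuousLinearMap.apply_apply] at this
    rw [this]
    exact tsum_congr fun n => (haeq n).symm
  -- difference = tail
  have hdiff : u (t + h) - ∑ k ∈ Finset.range (p + 1), a k = ∑' n : ℕ, a (n + (p + 1)) := by
    rw [hexp, sub_eq_iff_eq_add', Summable.sum_add_tsum_nat_add (p + 1) hsuma]
  rw [hdiff]
  set x : ℝ := |h| * ‖A‖ with hx
  set C : ℝ := ‖u t‖ * ‖A‖ ^ (p + 1) * |h| ^ (p + 1) / (Nat.factorial (p + 1) : ℝ) with hC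
  have hb : ∀ n : ℕ, ‖a (n + (p + 1))‖ ≤ C * (x ^ n / (Nat.factorial n : ℝ)) := by
    intro n
    set k := n + (p + 1) with hk
    have hAk : ‖(A ^ k) (u t)‖ ≤ ‖A‖ ^ k * ‖u t‖ :=
      le_trans ((A ^ k).le_opNorm (u t))
        (mul_le_mul_of_nonneg_right (norm_pow_le' A (by omega)) (norm_nonneg _))
    have hnorm : ‖a k‖ = |h| ^ k / (Nat.factorial k : ℝ) * ‖(A ^ k) (u t)‖ := by
      rw [ha]
      rw [norm_smul, Real.norm_eq_abs, abs_div, abs_pow, Nat.abs_cast]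
    have hfac : ((Nat.factorial (p + 1) : ℝ)) * (Nat.factorial n : ℝ) ≤ (Nat.factorial k : ℝ) := by
      rw [← Nat.cast_mul]
      exact_mod_cast Nat.le_of_dvd (Nat.factorial_pos k)
        (by have hk2 : k = (p + 1) + n := by omega
            rw [hk2]; exact Nat.factorial_mul_factorial_dvd_factorial_add (p + 1) n)
    have h1 : ‖a k‖ ≤ |h| ^ k * ‖A‖ ^ k * ‖u t‖ / (Nat.factorial k : ℝ) := by
      rw [hnorm]
      have := mul_le_mul_of_nonneg_left hAk
        (by positivity : (0:ℝ) ≤ |h| ^ k / (Nat.factorial k : ℝ))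
      calc |h| ^ k / (Nat.factorial k : ℝ) * ‖(A ^ k) (u t)‖
          ≤ |h| ^ k / (Nat.factorial k : ℝ) * (‖A‖ ^ k * ‖u t‖) := this
        _ = |h| ^ k * ‖A‖ ^ k * ‖u t‖ / (Nat.factorial k : ℝ) := by ring
    have h2 : |h| ^ k * ‖A‖ ^ k * ‖u t‖ / (Nat.factorial k : ℝ) ≤
        |h| ^ k * ‖A‖ ^ k * ‖u t‖ / ((Nat.factorial (p + 1) : ℝ) * (Nat.factorial n : ℝ)) :=
      div_le_div_of_nonneg_left (by positivity) (by positivity) hfac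
    have h3 : |h| ^ k * ‖A‖ ^ k * ‖u t‖ / ((Nat.factorial (p + 1) : ℝ) * (Nat.factorial n : ℝ)) =
        C * (x ^ n / (Nat.factorial n : ℝ)) := by
      rw [hC, hx, hk]
      rw [pow_add, pow_add, mul_pow]
      ring
    linarith
  have hsb : Summable (fun n : ℕ => C * (x ^ n / (Nat.factorial n : ℝ))) :=
    (Real.summable_pow_div_factorial x).mul_left C
  have hsn : Summable (fun n : ℕ => ‖a (n + (p + 1))‖) :=
    Summable.of_nonneg_of_le (fun n => norm_nonneg _) hb hsb
  calc ‖∑' n : ℕ, a (n + (p + 1))‖ ≤ ∑' n : ℕ, ‖a (n + (p + 1))‖ := norm_tsum_le_tsum_norm hsn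
    _ ≤ ∑' n : ℕ, C * (x ^ n / (Nat.factorial n : ℝ)) := Summable.tsum_le_tsum hb hsn hsb
    _ = C * Real.exp x := by
        rw [tsum_mul_left, Real.exp_eq_exp_ℝ, exp_eq_tsum_div]
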